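/- arXiv:1503.06484 — 2 statements merged into one kernel-verified Lean document; each statement's English description precedes it below -/
import Mathlib

section
/- Let t ∈ 𝒟 and suppose every entry of z = Ψ(t) is nonzero. Then, as ε → 0⁺, the quantity sup{ d(Ψ(x), Ψ(t))/d(x,t) : x ∈ B⁰(t,ε) ∩ 𝒟, x ≠ t } converges to max_i ( |W(t)⁻¹ H₂(t)| |t| )_i / |z_i|. -/
open Matrix
open scoped Kronecker

noncomputable section

/-- column-stacking `vec` of a matrix, indexed by (column, row). -/
def vecM {a b : ℕ} (M : Matrix (Fin a) (Fin b) ℝ) : Fin b × Fin a → ℝ :=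
  fun ji => M ji.2 ji.1

/-- Euclidean norm of a finitely-indexed real vector. -/
def l2norm {ι : Type*} [Fintype ι] (v : ι → ℝ) : ℝ :=
  Real.sqrt (∑ i, v i ^ 2)

/-- Frobenius norm of a real matrix. -/
def frob {ι κ : Type*} [Fintype ι] [Fintype κ] (M : Matrix ι κ ℝ) : ℝ :=
  Real.sqrt (∑ i, ∑ j, M i j ^ 2)

/-- Spectral norm of a real matrix: supremum of `‖M v‖₂` over the closed unit ball. -/
def specNorm {ι κ : Type*} [Fintype ι] [Fintype κ] (M : Matrix ι κ ℝ) : ℝ :=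
  sSup ((fun v => l2norm (M.mulVec v)) '' {v | l2norm v ≤ 1})

/-- sup-norm (`‖·‖∞`) of a finitely-indexed real vector. -/
def linf {ι : Type*} [Fintype ι] (v : ι → ℝ) : ℝ := ⨆ i, |v i|

/-- max-row-sum (∞-operator) norm of a real matrix. -/
def rowSumNorm {ι κ : Type*} [Fintype ι] [Fintype κ] (M : Matrix ι κ ℝ) : ℝ :=
  ⨆ i, ∑ j, |M i j|

/-- max-norm (`‖·‖_max`) of a real matrix. -/
def maxNorm {ι κ : Type*} [Fintype ι] [Fintype κ] (M : Matrix ι κ ℝ) : ℝ :=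
  ⨆ i, ⨆ j, |M i j|

/-- entrywise absolute value of a matrix. -/
def matAbs {ι κ : Type*} (M : Matrix ι κ ℝ) : Matrix ι κ ℝ := M.map (fun x => |x|)

/-- spectral radius (maximum modulus of the complex eigenvalues) of a real square matrix. -/
def specRad {ι : Type*} [Fintype ι] [DecidableEq ι] (M : Matrix ι ι ℝ) : ENNReal :=
  spectralRadius ℂ (M.map (fun x => (x : ℂ)))

/-- index type for the stacked vector `z = (vec X₁; vec Y₁; …; vec X_p; vec Y_p)`:
component `(k, 0, ·)` holds `vec X_k` and `(k, 1, ·)` holds `vec Y_k`. -/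
abbrev BIdx (m n p : ℕ) := Fin p × Fin 2 × Fin n × Fin m

/-- index type for the vec'd data `(vec A_k; vec B_k; vec E_k; vec C_k; vec D_k; vec F_k)`
of one period. -/
abbrev CIdx (m n : ℕ) :=
  (Fin m × Fin m) ⊕ (Fin n × Fin n) ⊕ (Fin n × Fin m) ⊕
  (Fin m × Fin m) ⊕ (Fin n × Fin n) ⊕ (Fin n × Fin m)

variable {m n p : ℕ}

/-- the stacked vector `(vec X₁; vec Y₁; …; vec X_p; vec Y_p)`. -/
def bigVec (X Y : Fin p → Matrix (Fin m) (Fin n) ℝ) : BIdx m n p → ℝ :=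
  fun x => if x.2.1 = 0 then vecM (X x.1) x.2.2 else vecM (Y x.1) x.2.2

/-- the coefficient matrix `W` of the PGCS equation: block row `(k,0)` has `Iₙ ⊗ A_k` in
block column `(k,0)` and `−(B_kᵀ ⊗ Iₘ)` in block column `(k,1)`; block row `(k,1)` has
`Iₙ ⊗ C_k` in block column `(k+1 mod p, 0)` and `−(D_kᵀ ⊗ Iₘ)` in block column `(k,1)`. -/
def Wmat [NeZero p] (A C : Fin p → Matrix (Fin m) (Fin m) ℝ)
    (B D : Fin p → Matrix (Fin n) (Fin n) ℝ) :
    Matrix (BIdx m n p) (BIdx m n p) ℝ :=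
  Matrix.of fun x y =>
    if x.2.1 = 0 then
      (if y.1 = x.1 ∧ y.2.1 = 0 then
        ((1 : Matrix (Fin n) (Fin n) ℝ) ⊗ₖ A x.1) x.2.2 y.2.2 else 0) +
      (if y.1 = x.1 ∧ y.2.1 = 1 then
        (-((B x.1)ᵀ ⊗ₖ (1 : Matrix (Fin m) (Fin m) ℝ))) x.2.2 y.2.2 else 0)
    else
      (if y.1 = x.1 + 1 ∧ y.2.1 = 0 then
        ((1 : Matrix (Fin n) (Fin n) ℝ) ⊗ₖ C x.1) x.2.2 y.2.2 else 0) +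
      (if y.1 = x.1 ∧ y.2.1 = 1 then
        (-((D x.1)ᵀ ⊗ₖ (1 : Matrix (Fin m) (Fin m) ℝ))) x.2.2 y.2.2 else 0)

/-- the block-diagonal matrix `Ĥ = diag(Ĥ⁽¹⁾,…,Ĥ⁽ᵖ⁾)` (also `H₁`, `H₂`) with block
`Ĥ⁽ᵏ⁾ = [α_k (X_kᵀ ⊗ Iₘ), −β_k (Iₙ ⊗ Y_k), −γ_k I, 0, 0, 0;
        0, 0, 0, ζ_k (X_{k+1}ᵀ ⊗ Iₘ), −τ_k (Iₙ ⊗ Y_k), −δ_k I]`. -/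
def Hmat [NeZero p] (Xh Yh : Fin p → Matrix (Fin m) (Fin n) ℝ)
    (al be ga ze ta de : Fin p → ℝ) :
    Matrix (BIdx m n p) (Fin p × CIdx m n) ℝ :=
  Matrix.of fun x y =>
    if y.1 = x.1 then
      if x.2.1 = 0 then
        (match y.2 with
        | Sum.inl a => al x.1 * (((Xh x.1)ᵀ ⊗ₖ (1 : Matrix (Fin m) (Fin m) ℝ)) x.2.2 a)
        | Sum.inr (Sum.inl b) =>
            -(be x.1 * (((1 : Matrix (Fin n) (Fin n) ℝ) ⊗ₖ Yh x.1) x.2.2 b))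
        | Sum.inr (Sum.inr (Sum.inl e)) =>
            -(ga x.1 * ((1 : Matrix (Fin n × Fin m) (Fin n × Fin m) ℝ) x.2.2 e))
        | _ => 0)
      else
        (match y.2 with
        | Sum.inr (Sum.inr (Sum.inr (Sum.inl c))) =>
            ze x.1 * (((Xh (x.1 + 1))ᵀ ⊗ₖ (1 : Matrix (Fin m) (Fin m) ℝ)) x.2.2 c)
        | Sum.inr (Sum.inr (Sum.inr (Sum.inr (Sum.inl d)))) =>
            -(ta x.1 * (((1 : Matrix (Fin n) (Fin n) ℝ) ⊗ₖ Yh x.1) x.2.2 d))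
        | Sum.inr (Sum.inr (Sum.inr (Sum.inr (Sum.inr f)))) =>
            -(de x.1 * ((1 : Matrix (Fin n × Fin m) (Fin n × Fin m) ℝ) x.2.2 f))
        | _ => 0)
    else 0

/-- the parameter vector `t = (vec A₁; vec B₁; vec E₁; vec C₁; vec D₁; vec F₁; …)`. -/
def tvec (A C : Fin p → Matrix (Fin m) (Fin m) ℝ)
    (B D : Fin p → Matrix (Fin n) (Fin n) ℝ)
    (E F : Fin p → Matrix (Fin m) (Fin n) ℝ) : Fin p × CIdx m n → ℝ :=
  fun y =>
    match y.2 with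
    | Sum.inl a => vecM (A y.1) a
    | Sum.inr (Sum.inl b) => vecM (B y.1) b
    | Sum.inr (Sum.inr (Sum.inl e)) => vecM (E y.1) e
    | Sum.inr (Sum.inr (Sum.inr (Sum.inl c))) => vecM (C y.1) c
    | Sum.inr (Sum.inr (Sum.inr (Sum.inr (Sum.inl d)))) => vecM (D y.1) d
    | Sum.inr (Sum.inr (Sum.inr (Sum.inr (Sum.inr f)))) => vecM (F y.1) f

/-- the matrix `A_k` encoded in a parameter vector `t`. -/
def pA (t : Fin p × CIdx m n → ℝ) (k : Fin p) : Matrix (Fin m) (Fin m) ℝ :=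
  Matrix.of fun i j => t (k, Sum.inl (j, i))

/-- the matrix `B_k` encoded in a parameter vector `t`. -/
def pB (t : Fin p × CIdx m n → ℝ) (k : Fin p) : Matrix (Fin n) (Fin n) ℝ :=
  Matrix.of fun i j => t (k, Sum.inr (Sum.inl (j, i)))

/-- the matrix `E_k` encoded in a parameter vector `t`. -/
def pE (t : Fin p × CIdx m n → ℝ) (k : Fin p) : Matrix (Fin m) (Fin n) ℝ :=
  Matrix.of fun i j => t (k, Sum.inr (Sum.inr (Sum.inl (j, i))))

/-- the matrix `C_k` encoded in a parameter vector `t`. -/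
def pC (t : Fin p × CIdx m n → ℝ) (k : Fin p) : Matrix (Fin m) (Fin m) ℝ :=
  Matrix.of fun i j => t (k, Sum.inr (Sum.inr (Sum.inr (Sum.inl (j, i)))))

/-- the matrix `D_k` encoded in a parameter vector `t`. -/
def pD (t : Fin p × CIdx m n → ℝ) (k : Fin p) : Matrix (Fin n) (Fin n) ℝ :=
  Matrix.of fun i j => t (k, Sum.inr (Sum.inr (Sum.inr (Sum.inr (Sum.inl (j, i))))))

/-- the matrix `F_k` encoded in a parameter vector `t`. -/
def pF (t : Fin p × CIdx m n → ℝ) (k : Fin p) : Matrix (Fin m) (Fin n) ℝ :=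
  Matrix.of fun i j => t (k, Sum.inr (Sum.inr (Sum.inr (Sum.inr (Sum.inr (j, i))))))

/-- the matrix `W(t)` built from the parameter vector `t`. -/
def Wt [NeZero p] (t : Fin p × CIdx m n → ℝ) : Matrix (BIdx m n p) (BIdx m n p) ℝ :=
  Wmat (pA t) (pC t) (pB t) (pD t)

/-- the right-hand side `g(t) = (vec E₁; vec F₁; …; vec E_p; vec F_p)`. -/
def gt (t : Fin p × CIdx m n → ℝ) : BIdx m n p → ℝ := bigVec (pE t) (pF t)

/-- the set of parameters for which `W(t)` is invertible. -/
def Dset (m n p : ℕ) [NeZero p] : Set (Fin p × CIdx m n → ℝ) := {t | IsUnit (Wt t)}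

/-- the solution map `Ψ(t) = W(t)⁻¹ g(t)`. -/
def Psi [NeZero p] (t : Fin p × CIdx m n → ℝ) : BIdx m n p → ℝ := (Wt t)⁻¹.mulVec (gt t)

/-- the solution matrix `X_k` read off from `Ψ(t)`. -/
def Xsol [NeZero p] (t : Fin p × CIdx m n → ℝ) (k : Fin p) : Matrix (Fin m) (Fin n) ℝ :=
  Matrix.of fun i j => Psi t (k, (0 : Fin 2), (j, i))

/-- the solution matrix `Y_k` read off from `Ψ(t)`. -/
def Ysol [NeZero p] (t : Fin p × CIdx m n → ℝ) (k : Fin p) : Matrix (Fin m) (Fin n) ℝ :=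
  Matrix.of fun i j => Psi t (k, (1 : Fin 2), (j, i))

/-- the matrix `H₂(t)` (all tolerances equal to one), built from the solution `Ψ(t)`. -/
def H2t [NeZero p] (t : Fin p × CIdx m n → ℝ) : Matrix (BIdx m n p) (Fin p × CIdx m n) ℝ :=
  Hmat (Xsol t) (Ysol t) 1 1 1 1 1 1

/-- the componentwise relative ball `B⁰(a, ε)`. -/
def B0 {ι : Type*} (a : ι → ℝ) (ε : ℝ) : Set (ι → ℝ) := {x | ∀ i, |x i - a i| ≤ ε * |a i|}

/-- the componentwise distance `d(x, a)`. -/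
def cdist {ι : Type*} [Fintype ι] (x a : ι → ℝ) : ℝ :=
  ⨆ i, if a i = 0 then |x i - a i| else |x i - a i| / |a i|

open Filter

section absLemma

variable {ι κ : Type*} [Fintype ι] [Fintype κ] [Nonempty ι] [Nonempty κ]

lemma cdist_nonneg (x a : ι → ℝ) : 0 ≤ cdist x a := by
  refine le_ciSup_of_le (Set.Finite.bddAbove (Set.finite_range _)) (Classical.arbitrary ι) ?_
  split <;> positivity

lemma cdist_le_of_mem_B0 {x a : ι → ℝ} {ε : ℝ} (hε : 0 ≤ ε) (hx : x ∈ B0 a ε) :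
    cdist x a ≤ ε := by
  refine ciSup_le fun i => ?_
  split_ifs with h
  · have := hx i; rw [h] at this; simp at this; simpa [h, this] using hε
  · rw [div_le_iff₀ (abs_pos.2 h)]
    exact hx i

lemma abs_sub_le_cdist_mul {x a : ι → ℝ} {ε : ℝ} (hε : 0 ≤ ε) (hx : x ∈ B0 a ε) (j : ι) :
    |x j - a j| ≤ cdist x a * |a j| := by
  by_cases h : a j = 0
  · have h2 := hx j
    rw [h] at h2; simp at h2
    simp [h, h2, sub_self]
  · have h1 : |x j - a j| / |a j| ≤ cdist x a := by
      refine le_ciSup_of_le (Set.Finite.bddAbove (Set.finite_range _)) j ?_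
      simp [h]
    calc |x j - a j| = |x j - a j| / |a j| * |a j| := by
          field_simp
      _ ≤ cdist x a * |a j| := by
          exact mul_le_mul_of_nonneg_right h1 (abs_nonneg _)

lemma cdist_pos {x a : ι → ℝ} {ε : ℝ} (hε : 0 ≤ ε) (hx : x ∈ B0 a ε) (hne : x ≠ a) :
    0 < cdist x a := by
  obtain ⟨j, hj⟩ : ∃ j, x j ≠ a j := by
    by_contra h; push_neg at h; exact hne (funext h)
  have haj : a j ≠ 0 := by
    intro h0
    have h2 := hx j
    rw [h0] at h2; simp at h2
    exact hj (by rw [h2, h0])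
  refine lt_of_lt_of_le ?_ (le_ciSup_of_le (Set.Finite.bddAbove (Set.finite_range _)) j le_rfl)
  simp only [haj, if_false]
  exact div_pos (abs_pos.2 (sub_ne_zero.2 hj)) (abs_pos.2 haj)

end absLemma

section mainLemma

variable {ι κ : Type*} [Fintype ι] [Fintype κ] [Nonempty ι] [Nonempty κ]

lemma norm_sub_le_cdist {x t : ι → ℝ} {ε : ℝ} (hε : 0 ≤ ε) (hx : x ∈ B0 t ε) :
    ‖x - t‖ ≤ cdist x t * ‖t‖ := by
  rw [pi_norm_le_iff_of_nonneg (mul_nonneg (cdist_nonneg x t) (norm_nonneg t))]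
  intro j
  have h1 := abs_sub_le_cdist_mul hε hx j
  have h2 : |t j| ≤ ‖t‖ := by simpa [Real.norm_eq_abs] using norm_le_pi_norm t j
  calc ‖(x - t) j‖ = |x j - t j| := by simp [Real.norm_eq_abs]
    _ ≤ cdist x t * |t j| := h1
    _ ≤ cdist x t * ‖t‖ := mul_le_mul_of_nonneg_left h2 (cdist_nonneg x t)

lemma cond_limit (f : (ι → ℝ) → (κ → ℝ)) (t : ι → ℝ) {U : Set (ι → ℝ)} (hU : IsOpen U)
    (htU : t ∈ U) (ht0 : t ≠ 0) (L : (ι → ℝ) →L[ℝ] (κ → ℝ)) (G : Matrix κ ι ℝ)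
    (hLG : ∀ h, L h = G.mulVec h) (hf : HasFDerivAt f L t)
    (hz : ∀ i, f t i ≠ 0) :
    Tendsto (fun ε : ℝ => sSup {q : ℝ | ∃ x, x ∈ B0 t ε ∩ U ∧ x ≠ t ∧
        q = cdist (f x) (f t) / cdist x t})
      (nhdsWithin 0 (Set.Ioi 0))
      (nhds (⨆ i, ((matAbs G).mulVec (fun j => |t j|)) i / |f t i|)) := by
  classical
  set z : κ → ℝ := f t with hzdef
  set M : κ → ℝ := (matAbs G).mulVec (fun j => |t j|) with hM
  set K : ℝ := ⨆ i, M i / |z i| with hK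
  have hMnonneg : ∀ i, 0 ≤ M i := by
    intro i
    rw [hM]
    refine Finset.sum_nonneg fun j _ => ?_
    have : 0 ≤ |G i j| * |t j| := by positivity
    simpa [matAbs, Matrix.map_apply] using this
  obtain ⟨iz, hiz⟩ := Finite.exists_min (fun i : κ => |z i|)
  have hzmin : 0 < |z iz| := abs_pos.2 (hz iz)
  obtain ⟨i0, hi0⟩ := Finite.exists_max (fun i : κ => M i / |z i|)
  have hKi0 : K = M i0 / |z i0| := by
    refine le_antisymm (ciSup_le hi0) (le_ciSup (f := fun i => M i / |z i|) (Set.Finite.bddAbove (Set.finite_range _)) i0)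
  have hT : (0:ℝ) < ‖t‖ := norm_pos_iff.2 ht0
  obtain ⟨j0, hj0⟩ : ∃ j, t j ≠ 0 := by
    by_contra hcon; push_neg at hcon; exact ht0 (funext hcon)
  -- coordinatewise bound on Mi/|z i|
  have hMK : ∀ i, M i / |z i| ≤ K :=
    fun i => le_ciSup (f := fun i => M i / |z i|) (Set.Finite.bddAbove (Set.finite_range _)) i
  rw [Metric.tendsto_nhdsWithin_nhds]
  intro δ hδ
  set η : ℝ := δ * |z iz| / (2 * ‖t‖) with hηdef
  have hη : 0 < η := by positivity
  have hηval : η * ‖t‖ / |z iz| = δ / 2 := by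
    field_simp [hηdef]
    rw [hηdef]
    field_simp
  have hlo := hf.isLittleO.def hη
  rw [Metric.eventually_nhds_iff] at hlo
  obtain ⟨r, hr, hrb⟩ := hlo
  obtain ⟨ρ, hρ, hρU⟩ := Metric.isOpen_iff.1 hU t htU
  refine ⟨min (r / ‖t‖) (ρ / ‖t‖), by positivity, ?_⟩
  intro ε hε hεd
  have hε0 : (0:ℝ) < ε := hε
  rw [Real.dist_eq, sub_zero, abs_of_pos hε0, lt_min_iff] at hεd
  have hεr : ε * ‖t‖ < r := by
    rw [← lt_div_iff₀ hT]; exact hεd.1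
  have hερ : ε * ‖t‖ < ρ := by
    rw [← lt_div_iff₀ hT]; exact hεd.2
  have hball : ∀ x ∈ B0 t ε, ‖x - t‖ ≤ ε * ‖t‖ := by
    intro x hx
    rw [pi_norm_le_iff_of_nonneg (by positivity)]
    intro j
    have h2 : |t j| ≤ ‖t‖ := by simpa [Real.norm_eq_abs] using norm_le_pi_norm t j
    calc ‖(x - t) j‖ = |x j - t j| := by simp [Real.norm_eq_abs]
      _ ≤ ε * |t j| := hx j
      _ ≤ ε * ‖t‖ := mul_le_mul_of_nonneg_left h2 hε0.le
  set S : Set ℝ := {q : ℝ | ∃ x, x ∈ B0 t ε ∩ U ∧ x ≠ t ∧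
      q = cdist (f x) (f t) / cdist x t} with hS
  -- upper bound
  have hub : ∀ q ∈ S, q ≤ K + δ / 2 := by
    rintro q ⟨x, ⟨hxB, hxU⟩, hxne, rfl⟩
    have hd : 0 < cdist x t := cdist_pos hε0.le hxB hxne
    have hΔr : ‖x - t‖ < r := lt_of_le_of_lt (hball x hxB) hεr
    have herr : ‖f x - f t - L (x - t)‖ ≤ η * ‖x - t‖ := by
      apply hrb
      rwa [dist_eq_norm]
    have hΔd : ‖x - t‖ ≤ cdist x t * ‖t‖ := norm_sub_le_cdist hε0.le hxB
    have hcoord : ∀ i, |f x i - z i| ≤ cdist x t * M i + η * ‖x - t‖ := by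
      intro i
      have h1 : |L (x - t) i| ≤ cdist x t * M i := by
        rw [hLG]
        have : G.mulVec (x - t) i = ∑ j, G i j * (x j - t j) := by
          simp [Matrix.mulVec, dotProduct]
        rw [this, hM]
        calc |∑ j, G i j * (x j - t j)| ≤ ∑ j, |G i j * (x j - t j)| :=
              Finset.abs_sum_le_sum_abs _ _
          _ ≤ ∑ j, |G i j| * (cdist x t * |t j|) := by
              refine Finset.sum_le_sum fun j _ => ?_
              rw [abs_mul]
              exact mul_le_mul_of_nonneg_left (abs_sub_le_cdist_mul hε0.le hxB j)
                (abs_nonneg _)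
          _ = cdist x t * ∑ j, |G i j| * |t j| := by
              rw [Finset.mul_sum]; congr 1; funext j; ring
          _ = cdist x t * ((matAbs G).mulVec (fun j => |t j|)) i := by
              simp [Matrix.mulVec, dotProduct, matAbs, Matrix.map_apply, Finset.mul_sum]
      have h2 : |f x i - z i - L (x - t) i| ≤ η * ‖x - t‖ := by
        have := norm_le_pi_norm (f x - f t - L (x - t)) i
        simp only [Pi.sub_apply, Real.norm_eq_abs] at this
        exact this.trans herr
      have h3 : |f x i - z i| ≤ |L (x - t) i| + |f x i - z i - L (x - t) i| := by
        have := abs_add_le (L (x - t) i) (f x i - z i - L (x - t) i)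
        simpa using this
      linarith
    have hcd : cdist (f x) z ≤ cdist x t * K + η * ‖x - t‖ / |z iz| := by
      refine ciSup_le fun i => ?_
      rw [if_neg (hz i)]
      rw [div_le_iff₀ (abs_pos.2 (hz i))]
      have hMKi : M i ≤ K * |z i| := by
        have := hMK i
        rw [div_le_iff₀ (abs_pos.2 (hz i))] at this
        linarith
      have hzle : |z iz| ≤ |z i| := hiz i
      have h4 : η * ‖x - t‖ ≤ η * ‖x - t‖ / |z iz| * |z i| := by
        have hnn : 0 ≤ η * ‖x - t‖ / |z iz| :=
          div_nonneg (mul_nonneg hη.le (norm_nonneg _)) (abs_nonneg _)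
        calc η * ‖x - t‖ = η * ‖x - t‖ / |z iz| * |z iz| := by
              field_simp
          _ ≤ η * ‖x - t‖ / |z iz| * |z i| := mul_le_mul_of_nonneg_left hzle hnn
      calc |f x i - z i| ≤ cdist x t * M i + η * ‖x - t‖ := hcoord i
        _ ≤ cdist x t * (K * |z i|) + η * ‖x - t‖ / |z iz| * |z i| := by
            exact add_le_add (mul_le_mul_of_nonneg_left hMKi (cdist_nonneg x t)) h4
        _ = (cdist x t * K + η * ‖x - t‖ / |z iz|) * |z i| := by ring
    rw [div_le_iff₀ hd]
    have h5 : η * ‖x - t‖ / |z iz| ≤ cdist x t * (δ / 2) := by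
      rw [div_le_iff₀ hzmin]
      have h6 : η * ‖x - t‖ ≤ η * (cdist x t * ‖t‖) := mul_le_mul_of_nonneg_left hΔd hη.le
      have h7 : cdist x t * (δ / 2) * |z iz| = cdist x t * (η * ‖t‖) := by
        rw [← hηval]; field_simp
      rw [h7]
      linarith
    calc cdist (f x) z ≤ cdist x t * K + η * ‖x - t‖ / |z iz| := hcd
      _ ≤ cdist x t * K + cdist x t * (δ / 2) := by linarith
      _ = (K + δ / 2) * cdist x t := by ring
  -- the witness
  set σ : ι → ℝ := fun j => if 0 ≤ G i0 j * t j then 1 else -1 with hσdef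
  have hσabs : ∀ j, |σ j| = 1 := by
    intro j; by_cases hs : 0 ≤ G i0 j * t j <;> simp [hσdef, hs]
  set x' : ι → ℝ := fun j => t j + ε * (σ j * t j) with hx'def
  have hΔ' : ∀ j, x' j - t j = ε * (σ j * t j) := fun j => by rw [hx'def]; ring
  have hx'B : x' ∈ B0 t ε := by
    intro j
    rw [hΔ', abs_mul, abs_mul, hσabs, abs_of_pos hε0]
    ring_nf
    exact le_rfl
  have hx'sub : ‖x' - t‖ ≤ ε * ‖t‖ := hball x' hx'B
  have hx'U : x' ∈ U := by
    apply hρU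
    rw [Metric.mem_ball, dist_eq_norm]
    exact lt_of_le_of_lt hx'sub hερ
  have hx'ne : x' ≠ t := by
    intro hcon
    have : x' j0 - t j0 = 0 := by rw [hcon]; ring
    rw [hΔ'] at this
    rcases mul_eq_zero.1 this with h | h
    · exact hε0.ne' h
    · rcases mul_eq_zero.1 h with h' | h'
      · have := hσabs j0; rw [h'] at this; simp at this
      · exact hj0 h'
  have hcdx' : cdist x' t = ε := by
    refine le_antisymm (cdist_le_of_mem_B0 hε0.le hx'B) ?_
    refine le_ciSup_of_le (Set.Finite.bddAbove (Set.finite_range _)) j0 ?_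
    rw [if_neg hj0, hΔ', abs_mul, abs_mul, hσabs, abs_of_pos hε0]
    rw [one_mul, mul_div_assoc, div_self (abs_ne_zero.2 hj0), mul_one]
  have hkey : L (x' - t) i0 = ε * M i0 := by
    rw [hLG, hM]
    have h1 : G.mulVec (x' - t) i0 = ∑ j, G i0 j * (ε * (σ j * t j)) := by
      simp only [Matrix.mulVec, dotProduct, Pi.sub_apply]
      congr 1; funext j; rw [hΔ' j]
    rw [h1]
    have h2 : ((matAbs G).mulVec fun j => |t j|) i0 = ∑ j, |G i0 j| * |t j| := by
      simp [Matrix.mulVec, dotProduct, matAbs, Matrix.map_apply]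
    rw [h2, Finset.mul_sum]
    refine Finset.sum_congr rfl fun j _ => ?_
    simp only [hσdef]
    split_ifs with hsign
    · rw [← abs_mul]
      rw [abs_of_nonneg hsign]
      ring
    · push_neg at hsign
      rw [← abs_mul, abs_of_neg hsign]
      ring
  have herr' : ‖f x' - f t - L (x' - t)‖ ≤ η * ‖x' - t‖ := by
    apply hrb
    rw [dist_eq_norm]
    exact lt_of_le_of_lt hx'sub hεr
  have herri0 : |f x' i0 - z i0 - L (x' - t) i0| ≤ η * (ε * ‖t‖) := by
    have := norm_le_pi_norm (f x' - f t - L (x' - t)) i0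
    simp only [Pi.sub_apply, Real.norm_eq_abs] at this
    refine this.trans (herr'.trans ?_)
    exact mul_le_mul_of_nonneg_left hx'sub hη.le
  have hlow : |f x' i0 - z i0| ≥ ε * M i0 - η * (ε * ‖t‖) := by
    have h3 : |L (x' - t) i0| ≤ |f x' i0 - z i0| + |f x' i0 - z i0 - L (x' - t) i0| := by
      have := abs_sub_abs_le_abs_sub (L (x' - t) i0) (f x' i0 - z i0)
      have h4 := abs_add_le (f x' i0 - z i0) (L (x' - t) i0 - (f x' i0 - z i0))
      calc |L (x' - t) i0| = |f x' i0 - z i0 + (L (x' - t) i0 - (f x' i0 - z i0))| := by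
            congr 1; ring
        _ ≤ |f x' i0 - z i0| + |L (x' - t) i0 - (f x' i0 - z i0)| := h4
        _ = |f x' i0 - z i0| + |f x' i0 - z i0 - L (x' - t) i0| := by
            rw [abs_sub_comm (L (x' - t) i0) (f x' i0 - z i0)]
    have h5 : |L (x' - t) i0| = ε * M i0 := by
      rw [hkey, abs_of_nonneg (mul_nonneg hε0.le (hMnonneg i0))]
    linarith
  set q' : ℝ := cdist (f x') (f t) / cdist x' t with hq'
  have hq'mem : q' ∈ S := ⟨x', ⟨hx'B, hx'U⟩, hx'ne, rfl⟩
  have hq'low : K - δ / 2 ≤ q' := by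
    have hcd' : cdist (f x') z ≥ (ε * M i0 - η * (ε * ‖t‖)) / |z i0| := by
      refine le_ciSup_of_le (Set.Finite.bddAbove (Set.finite_range _)) i0 ?_
      rw [if_neg (hz i0)]
      exact (div_le_div_iff_of_pos_right (abs_pos.2 (hz i0))).2 hlow
    have e3 : (ε * M i0 - η * (ε * ‖t‖)) / |z i0| / ε ≤ cdist (f x') z / ε :=
      (div_le_div_iff_of_pos_right hε0).2 hcd'
    have hεne : ε ≠ 0 := ne_of_gt hε0
    have e2 : (ε * M i0 - η * (ε * ‖t‖)) / |z i0| / ε = M i0 / |z i0| - η * ‖t‖ / |z i0| := by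
      have hnum : ε * M i0 - η * (ε * ‖t‖) = ε * (M i0 - η * ‖t‖) := by ring
      rw [hnum, div_div, mul_comm (|z i0|) ε, ← div_div, mul_div_cancel_left₀ _ hεne, sub_div]
    have e4 : η * ‖t‖ / |z i0| ≤ η * ‖t‖ / |z iz| := by
      apply div_le_div_of_nonneg_left (mul_nonneg hη.le (norm_nonneg _)) hzmin (hiz i0)
    have e5 : q' = cdist (f x') z / ε := by rw [hq', hcdx']
    rw [e5]
    rw [e2] at e3
    rw [hηval] at e4
    rw [hKi0]
    linarith
  have hne : S.Nonempty := ⟨q', hq'mem⟩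
  have hbdd : BddAbove S := ⟨K + δ / 2, fun q hq => hub q hq⟩
  have h1 : sSup S ≤ K + δ / 2 := csSup_le hne hub
  have h2 : K - δ / 2 ≤ sSup S := hq'low.trans (le_csSup hbdd hq'mem)
  rw [Real.dist_eq, abs_sub_lt_iff]
  constructor <;> linarith

end mainLemma

section Algebra

open ContinuousLinearMap

attribute [local instance] Matrix.linftyOpNormedRing Matrix.linftyOpNormedAlgebra

variable {m n p : ℕ} [NeZero m] [NeZero n] [NeZero p]

lemma Wt_add (t s : Fin p × CIdx m n → ℝ) : Wt (t + s) = Wt t + Wt s := by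
  ext x y
  simp only [Wt, Wmat, pA, pB, pC, pD, Matrix.of_apply, Matrix.add_apply,
    Matrix.kroneckerMap_apply, Matrix.transpose_apply, Matrix.neg_apply, Pi.add_apply,
    Matrix.one_apply]
  split_ifs <;> ring

lemma Wt_smul (c : ℝ) (t : Fin p × CIdx m n → ℝ) : Wt (c • t) = c • Wt t := by
  ext x y
  simp only [Wt, Wmat, pA, pB, pC, pD, Matrix.of_apply, Matrix.smul_apply,
    Matrix.kroneckerMap_apply, Matrix.transpose_apply, Matrix.neg_apply, Pi.smul_apply,
    Matrix.one_apply, smul_eq_mul]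
  split_ifs <;> ring

lemma gt_add (t s : Fin p × CIdx m n → ℝ) : gt (t + s) = gt t + gt s := by
  funext x
  simp only [gt, bigVec, vecM, pE, pF, Matrix.of_apply, Pi.add_apply]
  split_ifs <;> rfl

lemma gt_smul (c : ℝ) (t : Fin p × CIdx m n → ℝ) : gt (c • t) = c • gt t := by
  funext x
  simp only [gt, bigVec, vecM, pE, pF, Matrix.of_apply, Pi.smul_apply, smul_eq_mul]
  split_ifs <;> rfl

/-- `Wt` as a continuous linear map. -/
def WtC : ((Fin p × CIdx m n) → ℝ) →L[ℝ] Matrix (BIdx m n p) (BIdx m n p) ℝ :=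
  LinearMap.toContinuousLinearMap
    { toFun := Wt, map_add' := Wt_add, map_smul' := Wt_smul }

/-- `gt` as a continuous linear map. -/
def gtC : ((Fin p × CIdx m n) → ℝ) →L[ℝ] (BIdx m n p → ℝ) :=
  LinearMap.toContinuousLinearMap
    { toFun := gt, map_add' := gt_add, map_smul' := gt_smul }

@[simp] lemma WtC_apply (t : Fin p × CIdx m n → ℝ) : WtC t = Wt t := rfl
@[simp] lemma gtC_apply (t : Fin p × CIdx m n → ℝ) : gtC t = gt t := rfl

/-- `mulVec` as a continuous bilinear map. -/
def mvC : Matrix (BIdx m n p) (BIdx m n p) ℝ →L[ℝ]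
    (BIdx m n p → ℝ) →L[ℝ] (BIdx m n p → ℝ) :=
  LinearMap.toContinuousLinearMap
    { toFun := fun M => LinearMap.toContinuousLinearMap (Matrix.mulVecLin M)
      map_add' := by
        intro M N; ext v i
        simp [Matrix.add_mulVec]
      map_smul' := by
        intro c M; ext v i
        simp [Matrix.smul_mulVec] }

@[simp] lemma mvC_apply (M : Matrix (BIdx m n p) (BIdx m n p) ℝ) (v : BIdx m n p → ℝ) :
    mvC M v = M.mulVec v := rfl

lemma key_id (t h : Fin p × CIdx m n → ℝ) :
    gt h - (Wt h).mulVec (Psi t) = -((H2t t).mulVec h) := by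
  funext x
  obtain ⟨k, s, j, i⟩ := x
  have hs : s = 0 ∨ s = 1 := by omega
  rcases hs with rfl | rfl <;>
  · simp only [gt, bigVec, vecM, pE, pF, Wt, Wmat, H2t, Hmat, Matrix.mulVec,
      dotProduct, Fintype.sum_prod_type, Fin.sum_univ_two, Fintype.sum_sum_type,
      Matrix.kroneckerMap_apply, Matrix.one_apply, Matrix.transpose_apply, Matrix.neg_apply,
      Xsol, Ysol, pA, pB, pC, pD, Matrix.of_apply, Pi.sub_apply, Pi.neg_apply,
      Pi.one_apply, one_mul, mul_one, mul_zero, zero_mul, add_zero, zero_add,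
      Finset.sum_ite_eq, Finset.sum_ite_eq', Finset.mem_univ, if_true, ite_mul, mul_ite,
      Finset.sum_sub_distrib, Finset.sum_neg_distrib, and_true, true_and,
      (by decide : ¬(1:Fin 2) = 0), (by decide : ¬(0:Fin 2) = 1), Prod.mk.injEq,
      neg_mul, neg_neg, mul_neg, and_false, false_and, if_false, Finset.sum_const_zero]
    simp only [Finset.sum_ite_irrel, Finset.sum_const_zero, Finset.sum_add_distrib,
      Finset.sum_neg_distrib, Finset.sum_ite_eq, Finset.sum_ite_eq', Finset.mem_univ,
      if_true, add_zero, zero_add, neg_add, neg_neg, ite_and]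
    simp only [mul_comm]
    ring

lemma psi_eq (x : Fin p × CIdx m n → ℝ) :
    Psi x = mvC (Ring.inverse (Wt x)) (gt x) := by
  rw [mvC_apply, ← Matrix.nonsing_inv_eq_ringInverse]
  rfl

lemma psi_hasFDerivAt (t : Fin p × CIdx m n → ℝ) (ht : t ∈ Dset m n p) :
    HasFDerivAt (Psi (m := m) (n := n) (p := p))
      (LinearMap.toContinuousLinearMap
        (Matrix.mulVecLin (-((Wt t)⁻¹ * H2t t)))) t := by
  obtain ⟨u, hu⟩ := ht
  have hWder : HasFDerivAt (fun x : Fin p × CIdx m n → ℝ => Wt x) WtC t := by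
    exact WtC.hasFDerivAt (x := t)
  have hinv : HasFDerivAt (fun x : Fin p × CIdx m n → ℝ => Ring.inverse (Wt x))
      ((-mulLeftRight ℝ _ ↑u⁻¹ ↑u⁻¹).comp WtC) t := by
    have h1 := hasFDerivAt_ringInverse (𝕜 := ℝ) u
    rw [hu] at h1
    exact h1.comp t hWder
  have hc : HasFDerivAt (fun x : Fin p × CIdx m n → ℝ => mvC (Ring.inverse (Wt x)))
      (mvC.comp ((-mulLeftRight ℝ _ ↑u⁻¹ ↑u⁻¹).comp WtC)) t :=
    (mvC.hasFDerivAt).comp t hinv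
  have hg : HasFDerivAt (fun x : Fin p × CIdx m n → ℝ => gt x) gtC t := by
    simpa using gtC.hasFDerivAt (x := t)
  have happ := hc.clm_apply hg
  have hfun : (fun x : Fin p × CIdx m n → ℝ => mvC (Ring.inverse (Wt x)) (gt x)) =
      Psi (m := m) (n := n) (p := p) := by
    funext x; rw [psi_eq]
  rw [hfun] at happ
  refine HasFDerivAt.congr_fderiv happ ?_
  symm
  refine ContinuousLinearMap.ext fun h => ?_
  funext x
  have huinv : (↑u⁻¹ : Matrix (BIdx m n p) (BIdx m n p) ℝ) = (Wt t)⁻¹ := by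
    rw [← hu, ← Matrix.coe_units_inv]
  simp only [ContinuousLinearMap.add_apply, ContinuousLinearMap.coe_comp', Function.comp_apply,
    ContinuousLinearMap.flip_apply, ContinuousLinearMap.neg_apply,
    ContinuousLinearMap.mulLeftRight_apply, WtC_apply, gtC_apply, mvC_apply,
    LinearMap.coe_toContinuousLinearMap', Matrix.mulVecLin_apply, huinv]
  have e1 : ((Wt t)⁻¹ * Wt h * (Wt t)⁻¹).mulVec (gt t)
      = (Wt t)⁻¹.mulVec ((Wt h).mulVec (Psi t)) := by
    rw [← Matrix.mulVec_mulVec, ← Matrix.mulVec_mulVec]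
    rfl
  have e2 : (Wt t)⁻¹.mulVec (gt h) - (Wt t)⁻¹.mulVec ((Wt h).mulVec (Psi t))
      = (Wt t)⁻¹.mulVec (gt h - (Wt h).mulVec (Psi t)) := by
    rw [Matrix.mulVec_sub]
  have e3 := key_id t h
  have hv : (-((Wt t)⁻¹ * H2t t)).mulVec h
      = (Wt t)⁻¹.mulVec (gt h) + -(((Wt t)⁻¹ * Wt h * (Wt t)⁻¹).mulVec (gt t)) := by
    rw [Matrix.neg_mulVec, ← Matrix.mulVec_mulVec, ← Matrix.mulVec_neg, ← e3, ← e2, ← e1,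
      sub_eq_add_neg]
  rw [hv]
  simp [← Matrix.nonsing_inv_eq_ringInverse, Matrix.neg_mulVec, ContinuousLinearMap.comp_apply,
    ContinuousLinearMap.neg_apply, ContinuousLinearMap.mulLeftRight_apply, mvC_apply, WtC_apply]
  change _ = ((-((Wt t)⁻¹ * Wt h * (Wt t)⁻¹)) *ᵥ gt t) x
  rw [Matrix.neg_mulVec]
  rfl

lemma isOpen_Dset : IsOpen (Dset m n p) := by
  have hcont : Continuous (fun x : Fin p × CIdx m n → ℝ => (Wt x).det) :=
    Continuous.matrix_det (by exact WtC.continuous)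
  have : Dset m n p = (fun x : Fin p × CIdx m n → ℝ => (Wt x).det) ⁻¹' ({0}ᶜ) := by
    ext x
    simp [Dset, Matrix.isUnit_iff_isUnit_det, isUnit_iff_ne_zero]
  rw [this]
  exact isOpen_compl_singleton.preimage hcont

lemma t_ne_zero {t : Fin p × CIdx m n → ℝ} (ht : t ∈ Dset m n p) : t ≠ 0 := by
  rintro rfl
  have hW0 : Wt (0 : Fin p × CIdx m n → ℝ) = 0 := by
    have := Wt_smul (m := m) (n := n) (p := p) 0 0
    simpa using this
  have h2 : IsUnit (Wt (0 : Fin p × CIdx m n → ℝ)) := ht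
  rw [hW0, Matrix.isUnit_iff_isUnit_det, Matrix.det_zero] at h2
  simp at h2

lemma matAbs_neg {ι κ : Type*} (M : Matrix ι κ ℝ) : matAbs (-M) = matAbs M := by
  ext i j
  simp [matAbs, Matrix.map_apply]

end Algebra
/-- the componentwise condition number of `Ψ` at `t` equals
`max_i (|W(t)⁻¹H₂(t)| |t|)_i / |Ψ(t)_i|`. -/
theorem componentwise_condition_number (m n p : ℕ) [NeZero m] [NeZero n] [NeZero p]
    (t : Fin p × CIdx m n → ℝ) (ht : t ∈ Dset m n p) (hz : ∀ i, Psi t i ≠ 0) :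
    Filter.Tendsto
      (fun ε : ℝ => sSup {q : ℝ | ∃ x, x ∈ B0 t ε ∩ Dset m n p ∧ x ≠ t ∧
        q = cdist (Psi x) (Psi t) / cdist x t})
      (nhdsWithin 0 (Set.Ioi 0))
      (nhds (⨆ i, ((matAbs ((Wt t)⁻¹ * H2t t)).mulVec (fun j => |t j|)) i /
        |Psi t i|)) := by

  have key := cond_limit (Psi (m := m) (n := n) (p := p)) t isOpen_Dset ht (t_ne_zero ht)
    (LinearMap.toContinuousLinearMap (Matrix.mulVecLin (-((Wt t)⁻¹ * H2t t))))
    (-((Wt t)⁻¹ * H2t t)) (fun h => rfl) (psi_hasFDerivAt t ht) hz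
  rw [matAbs_neg] at key
  exact key
end
end

section
/- Assume W is invertible, let (X_k, Y_k) be the unique solution of the PGCS equation with z = (vec(X_1); vec(Y_1); …; vec(X_p); vec(Y_p)), let w ∈ ℝ^{2pmn} have entries w_i = (|W⁻¹H₂||t|)_i / |z_i| if z_i ≠ 0 and w_i = (|W⁻¹H₂||t|)_i if z_i = 0, and let S‡ be the diagonal matrix whose i-th diagonal entry is 1/z_i if z_i ≠ 0 and 1 otherwise. Then ‖w‖∞ ≤ ‖S‡ W⁻¹‖∞ · max over k = 1,…,p of max( ‖ |A_k||X_k| + |Y_k||B_k| + |E_k| ‖_max, ‖ |C_k||X_{k+1}| + |Y_k||D_k| + |F_k| ‖_max ). -/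
open Matrix
open scoped Kronecker

noncomputable section

variable {m n p : ℕ}

lemma entry_le_maxNorm {ι κ : Type*} [Fintype ι] [Fintype κ] (M : Matrix ι κ ℝ) (i : ι) (j : κ) :
    M i j ≤ maxNorm M := by
  calc M i j ≤ |M i j| := le_abs_self _
    _ ≤ ⨆ j', |M i j'| :=
        le_ciSup (Set.Finite.bddAbove (Set.finite_range fun j' => |M i j'|)) j
    _ ≤ maxNorm M :=
        le_ciSup (Set.Finite.bddAbove (Set.finite_range fun i' => ⨆ j', |M i' j'|)) i

lemma key_row [NeZero p] (A C : Fin p → Matrix (Fin m) (Fin m) ℝ)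
    (B D : Fin p → Matrix (Fin n) (Fin n) ℝ) (E F X Y : Fin p → Matrix (Fin m) (Fin n) ℝ)
    (k : Fin p) (s : Fin 2) (jc : Fin n) (ir : Fin m) :
    ∑ j : Fin p × CIdx m n, |Hmat X Y 1 1 1 1 1 1 (k, s, jc, ir) j| * |tvec A C B D E F j|
      ≤ ⨆ k : Fin p,
          max (maxNorm (matAbs (A k) * matAbs (X k) + matAbs (Y k) * matAbs (B k) + matAbs (E k)))
            (maxNorm (matAbs (C k) * matAbs (X (k + 1)) + matAbs (Y k) * matAbs (D k) + matAbs (F k))) := by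
  rw [Fintype.sum_prod_type]
  rw [Finset.sum_eq_single k (fun k' _ hk' => by
    apply Finset.sum_eq_zero; intro c _
    simp [Hmat, hk']) (by simp)]
  have hsup : ∀ r : ℝ,
      r ≤ max (maxNorm (matAbs (A k) * matAbs (X k) + matAbs (Y k) * matAbs (B k) + matAbs (E k)))
            (maxNorm (matAbs (C k) * matAbs (X (k + 1)) + matAbs (Y k) * matAbs (D k) + matAbs (F k))) →
      r ≤ ⨆ k : Fin p,
          max (maxNorm (matAbs (A k) * matAbs (X k) + matAbs (Y k) * matAbs (B k) + matAbs (E k)))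
            (maxNorm (matAbs (C k) * matAbs (X (k + 1)) + matAbs (Y k) * matAbs (D k) + matAbs (F k))) :=
    fun r hr => le_trans hr (le_ciSup (f := fun k : Fin p =>
      max (maxNorm (matAbs (A k) * matAbs (X k) + matAbs (Y k) * matAbs (B k) + matAbs (E k)))
        (maxNorm (matAbs (C k) * matAbs (X (k + 1)) + matAbs (Y k) * matAbs (D k) + matAbs (F k))))
      (Set.Finite.bddAbove (Set.finite_range _)) k)
  by_cases hs : s = 0
  case pos =>
    subst hs
    apply hsup _ (le_trans ?_ (le_max_left _ _))
    rw [Fintype.sum_sum_type, Fintype.sum_sum_type, Fintype.sum_sum_type,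
      Fintype.sum_sum_type, Fintype.sum_sum_type]
    have h1 : ∑ a : Fin m × Fin m,
        |Hmat X Y 1 1 1 1 1 1 (k, 0, jc, ir) (k, Sum.inl a)| * |tvec A C B D E F (k, Sum.inl a)|
        = (matAbs (A k) * matAbs (X k)) ir jc := by
      simp only [Hmat, tvec, vecM, Matrix.of_apply, if_pos rfl, Pi.one_apply, one_mul]
      rw [Fintype.sum_prod_type]
      simp [Matrix.mul_apply, matAbs, Matrix.kroneckerMap_apply, Matrix.one_apply, abs_mul,
        apply_ite abs, mul_ite, ite_mul, Finset.sum_ite_eq, mul_comm]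
    have h2 : ∑ b : Fin n × Fin n,
        |Hmat X Y 1 1 1 1 1 1 (k, 0, jc, ir) (k, Sum.inr (Sum.inl b))| * |tvec A C B D E F (k, Sum.inr (Sum.inl b))|
        = (matAbs (Y k) * matAbs (B k)) ir jc := by
      simp only [Hmat, tvec, vecM, Matrix.of_apply, if_pos rfl, Pi.one_apply, one_mul]
      rw [Fintype.sum_prod_type]
      simp [Matrix.mul_apply, matAbs, Matrix.kroneckerMap_apply, Matrix.one_apply, abs_mul,
        apply_ite abs, mul_ite, ite_mul, Finset.sum_ite_eq]
    have h3 : ∑ e : Fin n × Fin m,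
        |Hmat X Y 1 1 1 1 1 1 (k, 0, jc, ir) (k, Sum.inr (Sum.inr (Sum.inl e)))| * |tvec A C B D E F (k, Sum.inr (Sum.inr (Sum.inl e)))|
        = |E k ir jc| := by
      simp only [Hmat, tvec, vecM, Matrix.of_apply, if_pos rfl, Pi.one_apply, one_mul]
      simp [Matrix.one_apply, apply_ite abs, ite_mul, Finset.sum_ite_eq]
    have h4 : ∀ c : (Fin m × Fin m) ⊕ (Fin n × Fin n) ⊕ (Fin n × Fin m),
        Hmat X Y 1 1 1 1 1 1 (k, (0 : Fin 2), jc, ir)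
          (k, Sum.inr (Sum.inr (Sum.inr c))) = 0 := by
      rintro (c | d | f) <;> simp [Hmat]
    rw [h1, h2, h3]
    simp only [h4, abs_zero, zero_mul, Finset.sum_const_zero, add_zero]
    exact entry_le_maxNorm _ ir jc |>.trans_eq' (by simp [matAbs, Matrix.add_apply]; ring)
  case neg =>
    have hs1 : s = 1 := by omega
    subst hs1
    apply hsup _ (le_trans ?_ (le_max_right _ _))
    rw [Fintype.sum_sum_type, Fintype.sum_sum_type, Fintype.sum_sum_type,
      Fintype.sum_sum_type, Fintype.sum_sum_type]
    have h1 : ∑ c : Fin m × Fin m,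
        |Hmat X Y 1 1 1 1 1 1 (k, 1, jc, ir) (k, Sum.inr (Sum.inr (Sum.inr (Sum.inl c))))| *
          |tvec A C B D E F (k, Sum.inr (Sum.inr (Sum.inr (Sum.inl c))))|
        = (matAbs (C k) * matAbs (X (k + 1))) ir jc := by
      simp only [Hmat, tvec, vecM, Matrix.of_apply, if_pos rfl, Pi.one_apply, one_mul,
        Fin.one_eq_zero_iff, Nat.succ_ne_self, if_false, OfNat.ofNat_ne_one]
      rw [Fintype.sum_prod_type]
      simp [Matrix.mul_apply, matAbs, Matrix.kroneckerMap_apply, Matrix.one_apply, abs_mul,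
        apply_ite abs, mul_ite, ite_mul, Finset.sum_ite_eq, mul_comm]
    have h2 : ∑ d : Fin n × Fin n,
        |Hmat X Y 1 1 1 1 1 1 (k, 1, jc, ir) (k, Sum.inr (Sum.inr (Sum.inr (Sum.inr (Sum.inl d)))))| *
          |tvec A C B D E F (k, Sum.inr (Sum.inr (Sum.inr (Sum.inr (Sum.inl d)))))|
        = (matAbs (Y k) * matAbs (D k)) ir jc := by
      simp only [Hmat, tvec, vecM, Matrix.of_apply, if_pos rfl, Pi.one_apply, one_mul,
        Fin.one_eq_zero_iff, Nat.succ_ne_self, if_false, OfNat.ofNat_ne_one]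
      rw [Fintype.sum_prod_type]
      simp [Matrix.mul_apply, matAbs, Matrix.kroneckerMap_apply, Matrix.one_apply, abs_mul,
        apply_ite abs, mul_ite, ite_mul, Finset.sum_ite_eq]
    have h3 : ∑ f : Fin n × Fin m,
        |Hmat X Y 1 1 1 1 1 1 (k, 1, jc, ir) (k, Sum.inr (Sum.inr (Sum.inr (Sum.inr (Sum.inr f)))))| *
          |tvec A C B D E F (k, Sum.inr (Sum.inr (Sum.inr (Sum.inr (Sum.inr f)))))|
        = |F k ir jc| := by
      simp only [Hmat, tvec, vecM, Matrix.of_apply, if_pos rfl, Pi.one_apply, one_mul,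
        Fin.one_eq_zero_iff, Nat.succ_ne_self, if_false, OfNat.ofNat_ne_one]
      simp [Matrix.one_apply, apply_ite abs, ite_mul, Finset.sum_ite_eq]
    have h4 : ∀ a : Fin m × Fin m,
        Hmat X Y 1 1 1 1 1 1 (k, (1 : Fin 2), jc, ir) (k, Sum.inl a) = 0 := by
      intro a; simp [Hmat]
    have h5 : ∀ b : Fin n × Fin n,
        Hmat X Y 1 1 1 1 1 1 (k, (1 : Fin 2), jc, ir) (k, Sum.inr (Sum.inl b)) = 0 := by
      intro b; simp [Hmat]
    have h6 : ∀ e : Fin n × Fin m,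
        Hmat X Y 1 1 1 1 1 1 (k, (1 : Fin 2), jc, ir) (k, Sum.inr (Sum.inr (Sum.inl e))) = 0 := by
      intro e; simp [Hmat]
    rw [h1, h2, h3]
    simp only [h4, h5, h6, abs_zero, zero_mul, Finset.sum_const_zero, add_zero, zero_add]
    exact entry_le_maxNorm _ ir jc |>.trans_eq' (by simp [matAbs, Matrix.add_apply]; ring)


/-- upper bound for the componentwise condition number numerator. -/
theorem componentwise_condition_upper_bound (m n p : ℕ) [NeZero m] [NeZero n] [NeZero p]
    (A C : Fin p → Matrix (Fin m) (Fin m) ℝ) (B D : Fin p → Matrix (Fin n) (Fin n) ℝ)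
    (E F X Y : Fin p → Matrix (Fin m) (Fin n) ℝ)
    (hW : IsUnit (Wmat A C B D))
    (hsol : ∀ k : Fin p, A k * X k - Y k * B k = E k ∧ C k * X (k + 1) - Y k * D k = F k) :
    let z : BIdx m n p → ℝ := bigVec X Y
    let v : BIdx m n p → ℝ := (matAbs ((Wmat A C B D)⁻¹ * Hmat X Y 1 1 1 1 1 1)).mulVec
      (fun j => |tvec A C B D E F j|)
    let w : BIdx m n p → ℝ := fun i => if z i = 0 then v i else v i / |z i|
    let Sd : Matrix (BIdx m n p) (BIdx m n p) ℝ :=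
      Matrix.diagonal (fun i => if z i = 0 then 1 else (z i)⁻¹)
    linf w ≤
      rowSumNorm (Sd * (Wmat A C B D)⁻¹) *
        ⨆ k : Fin p,
          max (maxNorm (matAbs (A k) * matAbs (X k) + matAbs (Y k) * matAbs (B k) +
                matAbs (E k)))
            (maxNorm (matAbs (C k) * matAbs (X (k + 1)) + matAbs (Y k) * matAbs (D k) +
              matAbs (F k))) := by
  intro z v w Sd
  have hmaxnn : ∀ {ι κ : Type} [Fintype ι] [Fintype κ] (M : Matrix ι κ ℝ), 0 ≤ maxNorm M :=
    fun M => Real.iSup_nonneg fun i => Real.iSup_nonneg fun j => abs_nonneg _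
  set Mx := ⨆ k : Fin p,
      max (maxNorm (matAbs (A k) * matAbs (X k) + matAbs (Y k) * matAbs (B k) + matAbs (E k)))
        (maxNorm (matAbs (C k) * matAbs (X (k + 1)) + matAbs (Y k) * matAbs (D k) + matAbs (F k)))
    with hMx
  have hM0 : 0 ≤ Mx :=
    Real.iSup_nonneg fun k => le_max_of_le_left (hmaxnn _)
  set K := (Wmat A C B D)⁻¹ with hKdef
  set H := Hmat X Y (1 : Fin p → ℝ) 1 1 1 1 1 with hHdef
  set t0 := tvec A C B D E F with ht0
  have hrow : ∀ l : BIdx m n p, ∑ j, |H l j| * |t0 j| ≤ Mx := by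
    rintro ⟨k, s, jc, ir⟩
    exact key_row A C B D E F X Y k s jc ir
  have hv : ∀ i, v i ≤ (∑ l, |K i l|) * Mx := by
    intro i
    have h1 : v i = ∑ j, |(K * H) i j| * |t0 j| := by
      simp [v, matAbs, Matrix.mulVec, dotProduct]; rfl
    rw [h1]
    calc ∑ j, |(K * H) i j| * |t0 j|
        ≤ ∑ j, (∑ l, |K i l| * |H l j|) * |t0 j| := by
          refine Finset.sum_le_sum fun j _ => mul_le_mul_of_nonneg_right ?_ (abs_nonneg _)
          rw [Matrix.mul_apply]
          refine (Finset.abs_sum_le_sum_abs _ _).trans ?_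
          exact le_of_eq (Finset.sum_congr rfl fun l _ => abs_mul _ _)
      _ = ∑ l, |K i l| * (∑ j, |H l j| * |t0 j|) := by
          simp_rw [Finset.sum_mul, Finset.mul_sum]
          rw [Finset.sum_comm]
          exact Finset.sum_congr rfl fun l _ => Finset.sum_congr rfl fun j _ => by ring
      _ ≤ ∑ l, |K i l| * Mx :=
          Finset.sum_le_sum fun l _ => mul_le_mul_of_nonneg_left (hrow l) (abs_nonneg _)
      _ = (∑ l, |K i l|) * Mx := (Finset.sum_mul _ _ _).symm
  have hv0 : ∀ i, 0 ≤ v i := fun i =>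
    Finset.sum_nonneg fun j _ => mul_nonneg (abs_nonneg _) (abs_nonneg _)
  have hrowsum : ∀ i, ∑ l, |(Sd * K) i l|
      = |if z i = 0 then (1:ℝ) else (z i)⁻¹| * ∑ l, |K i l| := by
    intro i
    rw [Finset.mul_sum]
    refine Finset.sum_congr rfl fun l _ => ?_
    simp only [Sd, Matrix.diagonal_mul]
    split_ifs <;> simp [abs_mul]
  have hbd : ∀ i, |w i| ≤ rowSumNorm (Sd * K) * Mx := by
    intro i
    have hKs : ∑ l, |(Sd * K) i l| ≤ rowSumNorm (Sd * K) :=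
      le_ciSup (Set.Finite.bddAbove (Set.finite_range fun i' => ∑ l, |(Sd * K) i' l|)) i
    have key : w i ≤ (∑ l, |(Sd * K) i l|) * Mx := by
      rw [hrowsum i]
      by_cases hz : z i = 0
      · simpa [w, hz] using hv i
      · have hiz : (0:ℝ) < |z i| := abs_pos.mpr hz
        have : w i = v i / |z i| := by simp [w, hz]
        rw [this, if_neg hz, abs_inv]
        rw [div_le_iff₀ hiz]
        calc v i ≤ (∑ l, |K i l|) * Mx := hv i
          _ = |z i|⁻¹ * (∑ l, |K i l|) * Mx * |z i| := by
              field_simp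
    have hw0 : 0 ≤ w i := by
      by_cases hz : z i = 0
      · simpa [w, hz] using hv0 i
      · have : w i = v i / |z i| := by simp [w, hz]
        rw [this]; exact div_nonneg (hv0 i) (abs_nonneg _)
    rw [abs_of_nonneg hw0]
    exact key.trans (mul_le_mul_of_nonneg_right hKs hM0)
  exact ciSup_le hbd
end
end
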